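/- If the optimal α-value for JR of an instance is positive, then it lies in the finite set {j·k/n : j ∈ {1, …, ⌈n/k⌉ − 1}}; in particular, the optimal α-value for JR is a rational number. -/

import Mathlib

/-- A committee `W` satisfies α-JR: every group `S` of size at least `α·n/k`
with a commonly approved candidate contains a voter approving a committee member. -/
def satisfiesAlphaJR {n : ℕ} {C : Type*} [Fintype C] [DecidableEq C]
    (A : Fin n → Finset C) (W : Finset C) (k : ℕ) (α : ℝ) : Prop :=
  ∀ S : Finset (Fin n),
    α * n / k ≤ (S.card : ℝ) →
    (Finset.univ.filter fun c => ∀ v ∈ S, c ∈ A v).Nonempty →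
    ∃ v ∈ S, (A v ∩ W).Nonempty

/-- The infimum α-value of a committee W with respect to JR. -/
noncomputable def alphaJRvalue {n : ℕ} {C : Type*} [Fintype C] [DecidableEq C]
    (A : Fin n → Finset C) (k : ℕ) (W : Finset C) : ℝ :=
  sInf {α : ℝ | satisfiesAlphaJR A W k α}

/-- The optimal (minimum) α-value over all committees of size k. -/
noncomputable def alphaJRstar {n : ℕ} {C : Type*} [Fintype C] [DecidableEq C]
    (A : Fin n → Finset C) (k : ℕ) : ℝ :=
  sInf {a : ℝ | ∃ W : Finset C, W.card = k ∧ a = alphaJRvalue A k W}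

section Aux

open Finset
open scoped Classical

variable {n k : ℕ} {C : Type*} [Fintype C] [DecidableEq C]

/-- A "bad" group for committee `W`: nonempty, cohesive, and no member approves
any committee member. -/
def isBad (A : Fin n → Finset C) (W : Finset C) (S : Finset (Fin n)) : Prop :=
  S.Nonempty ∧ (Finset.univ.filter fun c => ∀ v ∈ S, c ∈ A v).Nonempty ∧
    ∀ v ∈ S, A v ∩ W = ∅

/-- The maximum size of a bad group (0 if none). -/
noncomputable def Mval (A : Fin n → Finset C) (W : Finset C) : ℕ :=
  Finset.univ.sup (fun S : Finset (Fin n) => if isBad A W S then S.card else 0)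

lemma bad_card_le_Mval {A : Fin n → Finset C} {W : Finset C} {S : Finset (Fin n)}
    (h : isBad A W S) : S.card ≤ Mval A W := by
  have := Finset.le_sup (f := fun S : Finset (Fin n) => if isBad A W S then S.card else 0)
    (Finset.mem_univ S)
  simpa [h, Mval] using this

lemma exists_bad_of_Mval_pos {A : Fin n → Finset C} {W : Finset C}
    (h : 0 < Mval A W) : ∃ S : Finset (Fin n), isBad A W S ∧ S.card = Mval A W := by
  obtain ⟨S, -, hS⟩ := Finset.exists_mem_eq_sup (Finset.univ : Finset (Finset (Fin n)))
    ⟨∅, Finset.mem_univ ∅⟩ (fun S : Finset (Fin n) => if isBad A W S then S.card else 0)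
  by_cases hb : isBad A W S
  · exact ⟨S, hb, by simpa [hb, Mval] using hS.symm⟩
  · rw [Mval] at h; rw [hS] at h; simp [hb] at h

lemma Mval_le {A : Fin n → Finset C} {W : Finset C} {m : ℕ}
    (h : ∀ S : Finset (Fin n), isBad A W S → S.card ≤ m) : Mval A W ≤ m := by
  apply Finset.sup_le
  intro S _
  by_cases hb : isBad A W S
  · simpa [hb] using h S hb
  · simp [hb]

/-- Characterization: the set of α satisfying α-JR is the open ray above `Mval·k/n`. -/
lemma satisfies_set_eq (A : Fin n → Finset C) (W : Finset C)
    (hn : 1 ≤ n) (hk : 1 ≤ k) (hC : Nonempty C) :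
    {α : ℝ | satisfiesAlphaJR A W k α} = Set.Ioi ((Mval A W : ℝ) * k / n) := by
  have hn0 : (0 : ℝ) < n := by exact_mod_cast hn
  have hk0 : (0 : ℝ) < k := by exact_mod_cast hk
  ext α
  simp only [Set.mem_setOf_eq, Set.mem_Ioi]
  constructor
  · intro hsat
    by_contra hle
    push_neg at hle
    by_cases hα : α ≤ 0
    · -- take S = ∅
      have h1 : α * n / k ≤ ((∅ : Finset (Fin n)).card : ℝ) := by
        simp only [Finset.card_empty, Nat.cast_zero]
        apply div_nonpos_of_nonpos_of_nonneg _ hk0.le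
        exact mul_nonpos_of_nonpos_of_nonneg hα hn0.le
      have h2 : (Finset.univ.filter fun c => ∀ v ∈ (∅ : Finset (Fin n)), c ∈ A v).Nonempty := by
        simpa using (Finset.univ_nonempty (α := C))
      obtain ⟨v, hv, -⟩ := hsat ∅ h1 h2
      exact absurd hv (by simp)
    · push_neg at hα
      have hM : 0 < Mval A W := by
        rcases Nat.eq_zero_or_pos (Mval A W) with h0 | h0
        · rw [h0] at hle; norm_num at hle; linarith
        · exact h0
      obtain ⟨S, hbad, hcard⟩ := exists_bad_of_Mval_pos hM
      have h1 : α * n / k ≤ (S.card : ℝ) := by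
        rw [hcard]
        rw [div_le_iff₀ hk0]
        have : α * n ≤ (Mval A W : ℝ) * k / n * n := by
          apply mul_le_mul_of_nonneg_right hle hn0.le
        calc α * n ≤ (Mval A W : ℝ) * k / n * n := this
          _ = (Mval A W : ℝ) * k := by field_simp
      obtain ⟨v, hv, hne⟩ := hsat S h1 hbad.2.1
      rw [hbad.2.2 v hv] at hne
      exact absurd hne (by simp)
  · intro hgt S h1 h2
    by_contra hno
    push_neg at hno
    have hSbig : (Mval A W : ℝ) < S.card := by
      have e1 : (Mval A W : ℝ) * k < α * n := by
        have := (div_lt_iff₀ hn0).mp hgt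
        linarith
      have e2 : (Mval A W : ℝ) < α * n / k := (lt_div_iff₀ hk0).mpr e1
      linarith
    have hSne : S.Nonempty := by
      rw [← Finset.card_pos]
      by_contra hc
      push_neg at hc
      have h0 : S.card = 0 := Nat.le_zero.mp hc
      rw [h0] at hSbig
      simp only [Nat.cast_zero] at hSbig
      have : (0:ℝ) ≤ (Mval A W : ℝ) := Nat.cast_nonneg _
      linarith
    have hbad : isBad A W S :=
      ⟨hSne, h2, fun v hv => hno v hv⟩
    exact absurd (bad_card_le_Mval hbad) (by exact_mod_cast not_le.mpr hSbig)

lemma alphaJRvalue_eq (A : Fin n → Finset C) (W : Finset C)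
    (hn : 1 ≤ n) (hk : 1 ≤ k) (hC : Nonempty C) :
    alphaJRvalue A k W = (Mval A W : ℝ) * k / n := by
  rw [alphaJRvalue, satisfies_set_eq A W hn hk hC, csInf_Ioi]

/-- Uncovered voters: those approving no committee member. -/
def Uncov (A : Fin n → Finset C) (W : Finset C) : Finset (Fin n) :=
  Finset.univ.filter (fun v => A v ∩ W = ∅)

lemma greedy_step (A : Fin n → Finset C) :
    ∀ j : ℕ, ∃ W : Finset C, W.card ≤ j ∧
      ((∀ S : Finset (Fin n), ⌈(n : ℝ) / (k : ℝ)⌉₊ ≤ S.card →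
          (Finset.univ.filter fun c => ∀ v ∈ S, c ∈ A v).Nonempty →
          ∃ v ∈ S, (A v ∩ W).Nonempty)
        ∨ (Uncov A W).card + j * ⌈(n : ℝ) / (k : ℝ)⌉₊ ≤ n) := by
  intro j
  induction j with
  | zero =>
      refine ⟨∅, le_rfl, Or.inr ?_⟩
      simpa using (Finset.card_le_univ (Uncov A (∅ : Finset C))).trans
        (le_of_eq (Fintype.card_fin n))
  | succ j ih =>
      obtain ⟨W, hWcard, hcase⟩ := ih
      rcases hcase with hdone | hbound
      · exact ⟨W, hWcard.trans (Nat.le_succ j), Or.inl hdone⟩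
      by_cases hdone : ∀ S : Finset (Fin n), ⌈(n : ℝ) / (k : ℝ)⌉₊ ≤ S.card →
          (Finset.univ.filter fun c => ∀ v ∈ S, c ∈ A v).Nonempty →
          ∃ v ∈ S, (A v ∩ W).Nonempty
      · exact ⟨W, hWcard.trans (Nat.le_succ j), Or.inl hdone⟩
      push_neg at hdone
      obtain ⟨S, hScard, hcoh, hno⟩ := hdone
      obtain ⟨x, hx⟩ := hcoh
      rw [Finset.mem_filter] at hx
      refine ⟨insert x W, le_trans (Finset.card_insert_le x W) (by omega), Or.inr ?_⟩
      have hSsub : S ⊆ Uncov A W := by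
        intro v hv
        simp only [Uncov, Finset.mem_filter, Finset.mem_univ, true_and]
        exact hno v hv
      have hsub : Uncov A (insert x W) ⊆ Uncov A W \ S := by
        intro v hv
        simp only [Uncov, Finset.mem_filter, Finset.mem_univ, true_and] at hv
        rw [Finset.mem_sdiff]
        constructor
        · simp only [Uncov, Finset.mem_filter, Finset.mem_univ, true_and]
          have : A v ∩ W ⊆ A v ∩ insert x W :=
            Finset.inter_subset_inter le_rfl (Finset.subset_insert x W)
          exact Finset.subset_empty.mp (hv ▸ this)
        · intro hvS
          have hxv : x ∈ A v ∩ insert x W :=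
            Finset.mem_inter.mpr ⟨hx.2 v hvS, Finset.mem_insert_self x W⟩
          rw [hv] at hxv
          exact absurd hxv (Finset.notMem_empty x)
      have e1 : (Uncov A W \ S).card + S.card = (Uncov A W).card :=
        Finset.card_sdiff_add_card_eq_card hSsub
      have e2 : (Uncov A (insert x W)).card ≤ (Uncov A W \ S).card :=
        Finset.card_le_card hsub
      have : (j + 1) * ⌈(n : ℝ) / (k : ℝ)⌉₊ = j * ⌈(n : ℝ) / (k : ℝ)⌉₊ + ⌈(n : ℝ) / (k : ℝ)⌉₊ := by
        ring
      rw [this]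
      linarith [hbound, hScard]

lemma exists_done (A : Fin n → Finset C) (hn : 1 ≤ n) (hk : 1 ≤ k)
    (hkC : k ≤ Fintype.card C) :
    ∃ W : Finset C, W.card = k ∧ ∀ S : Finset (Fin n), ⌈(n : ℝ) / (k : ℝ)⌉₊ ≤ S.card →
      (Finset.univ.filter fun c => ∀ v ∈ S, c ∈ A v).Nonempty →
      ∃ v ∈ S, (A v ∩ W).Nonempty := by
  have hn0 : (0 : ℝ) < n := by exact_mod_cast hn
  have hk0 : (0 : ℝ) < k := by exact_mod_cast hk
  have hc1 : 1 ≤ ⌈(n : ℝ) / (k : ℝ)⌉₊ := Nat.ceil_pos.mpr (by positivity)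
  have hkc : n ≤ k * ⌈(n : ℝ) / (k : ℝ)⌉₊ := by
    have h1 : (n : ℝ) / k ≤ (⌈(n : ℝ) / (k : ℝ)⌉₊ : ℝ) := Nat.le_ceil _
    have h2 : (n : ℝ) ≤ (k : ℝ) * (⌈(n : ℝ) / (k : ℝ)⌉₊ : ℝ) := by
      rw [div_le_iff₀ hk0] at h1
      linarith
    exact_mod_cast h2
  obtain ⟨W, hWcard, hcase⟩ := greedy_step (k := k) A k
  have hdone : ∀ S : Finset (Fin n), ⌈(n : ℝ) / (k : ℝ)⌉₊ ≤ S.card →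
      (Finset.univ.filter fun c => ∀ v ∈ S, c ∈ A v).Nonempty →
      ∃ v ∈ S, (A v ∩ W).Nonempty := by
    rcases hcase with h | h
    · exact h
    · intro S hScard hcoh
      by_contra hno
      push_neg at hno
      have hSsub : S ⊆ Uncov A W := by
        intro v hv
        simp only [Uncov, Finset.mem_filter, Finset.mem_univ, true_and]
        exact hno v hv
      have h0 : (Uncov A W).card = 0 := by omega
      have : S.card = 0 := Nat.le_zero.mp (h0 ▸ Finset.card_le_card hSsub)
      omega
  obtain ⟨W', hsub, hW'card⟩ := Finset.exists_superset_card_eq hWcard hkC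
  refine ⟨W', hW'card, fun S hS hcoh => ?_⟩
  obtain ⟨v, hv, hne⟩ := hdone S hS hcoh
  exact ⟨v, hv, hne.mono (Finset.inter_subset_inter le_rfl hsub)⟩

end Aux

/-- If the optimal α-value for JR is positive, it lies in
{j·k/n : 1 ≤ j ≤ ⌈n/k⌉ − 1}; in particular it is rational. -/
theorem alphaJRstar_mem_finite_set {n k : ℕ} {C : Type*} [Fintype C] [DecidableEq C]
    (A : Fin n → Finset C) (hn : 1 ≤ n) (hk : 1 ≤ k) (hkC : k ≤ Fintype.card C)
    (hpos : 0 < alphaJRstar A k) :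
    (∃ j : ℕ, 1 ≤ j ∧ j ≤ ⌈(n : ℝ) / (k : ℝ)⌉₊ - 1 ∧
      alphaJRstar A k = (j : ℝ) * k / n) ∧
    ∃ q : ℚ, alphaJRstar A k = (q : ℝ) := by
  classical
  have hC : Nonempty C := Fintype.card_pos_iff.mp (lt_of_lt_of_le hk hkC)
  have hn0 : (0 : ℝ) < n := by exact_mod_cast hn
  have hk0 : (0 : ℝ) < k := by exact_mod_cast hk
  set T := {a : ℝ | ∃ W : Finset C, W.card = k ∧ a = alphaJRvalue A k W} with hT
  have hTfin : T.Finite := by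
    apply Set.Finite.subset ((Set.finite_univ (α := Finset C)).image
      (fun W => alphaJRvalue A k W))
    rintro a ⟨W, -, rfl⟩
    exact ⟨W, trivial, rfl⟩
  have hTne : T.Nonempty := by
    obtain ⟨W, -, hWc⟩ := Finset.exists_subset_card_eq
      (show k ≤ (Finset.univ : Finset C).card by simpa using hkC)
    exact ⟨_, W, hWc, rfl⟩
  have hmem : alphaJRstar A k ∈ T := hTne.csInf_mem hTfin
  obtain ⟨W₀, hW₀, hstar⟩ := hmem
  have hval : alphaJRstar A k = (Mval A W₀ : ℝ) * k / n := by
    rw [hstar, alphaJRvalue_eq A W₀ hn hk hC]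
  have hj1 : 1 ≤ Mval A W₀ := by
    rcases Nat.eq_zero_or_pos (Mval A W₀) with h0 | h0
    · rw [hval, h0] at hpos
      norm_num at hpos
    · exact h0
  obtain ⟨W₁, hW₁c, hdone⟩ := exists_done A hn hk hkC
  have hle : alphaJRstar A k ≤ alphaJRvalue A k W₁ :=
    csInf_le hTfin.bddBelow ⟨W₁, hW₁c, rfl⟩
  have hM₁ : Mval A W₁ ≤ ⌈(n : ℝ) / (k : ℝ)⌉₊ - 1 := by
    apply Mval_le
    intro S hbad
    by_contra hcc
    push_neg at hcc
    have hc1 : 1 ≤ ⌈(n : ℝ) / (k : ℝ)⌉₊ := Nat.ceil_pos.mpr (by positivity)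
    have hS : ⌈(n : ℝ) / (k : ℝ)⌉₊ ≤ S.card := by omega
    obtain ⟨v, hv, hne⟩ := hdone S hS hbad.2.1
    rw [hbad.2.2 v hv] at hne
    exact absurd hne (by simp)
  have hM0le : Mval A W₀ ≤ Mval A W₁ := by
    rw [hval, alphaJRvalue_eq A W₁ hn hk hC] at hle
    have h1 : (Mval A W₀ : ℝ) * k ≤ (Mval A W₁ : ℝ) * k := by
      have := mul_le_mul_of_nonneg_right hle hn0.le
      rw [div_mul_cancel₀ _ hn0.ne', div_mul_cancel₀ _ hn0.ne'] at this
      exact this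
    have h2 : (Mval A W₀ : ℝ) ≤ (Mval A W₁ : ℝ) := le_of_mul_le_mul_right h1 hk0
    exact_mod_cast h2
  refine ⟨⟨Mval A W₀, hj1, le_trans hM0le hM₁, hval⟩,
    ⟨(Mval A W₀ * k : ℚ) / n, ?_⟩⟩
  rw [hval]
  push_cast
  ring
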